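/- arXiv:2301.03230 — 2 statements merged into one kernel-verified Lean document; each statement's English description precedes it below -/
import Mathlib

section
/- For all g ≥ 0 and q ≥ 1, the chromatic number of G_q(g) equals q+2. -/
/-- Edge corona product `G ⊛ K_q`: keep `G`, and for each edge of `G` add a fresh
copy of the complete graph on `q` vertices, joining all its vertices to both
endpoints of the edge. -/
def edgeCorona {V : Type} (G : SimpleGraph V) (q : ℕ) :
    SimpleGraph (V ⊕ (G.edgeSet × Fin q)) where
  Adj := fun x y => match x, y with
    | Sum.inl u, Sum.inl v => G.Adj u v
    | Sum.inl u, Sum.inr p => u ∈ (p.1 : Sym2 V)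
    | Sum.inr p, Sum.inl v => v ∈ (p.1 : Sym2 V)
    | Sum.inr p, Sum.inr r => p.1 = r.1 ∧ p.2 ≠ r.2
  symm := by
    constructor
    rintro (u | p) (v | r) h
    · exact G.adj_symm h
    · exact h
    · exact h
    · exact ⟨h.1.symm, h.2.symm⟩
  loopless := by
    constructor
    rintro (u | p) h
    · exact G.irrefl h
    · exact h.2 rfl

/-- The simplicial network `G_q(g)` together with its vertex type:
`G_q(0) = K_{q+2}` and `G_q(g+1) = G_q(g) ⊛ K_q`. -/
def Gaux (q : ℕ) : ℕ → Σ V : Type, SimpleGraph V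
  | 0 => ⟨Fin (q + 2), ⊤⟩
  | g + 1 => ⟨_, edgeCorona (Gaux q g).2 q⟩

abbrev GVert (q g : ℕ) : Type := (Gaux q g).1

abbrev Gnet (q g : ℕ) : SimpleGraph (GVert q g) := (Gaux q g).2

/-- The `q+2` hub nodes of `G_q(g)`: the vertices present from iteration `0`. -/
def hub (q : ℕ) : (g : ℕ) → Fin (q + 2) → GVert q g
  | 0 => id
  | g + 1 => fun k => Sum.inl (hub q g k)

open Finset

section aux
variable {V : Type} (G : SimpleGraph V) (q : ℕ) (c : G.Coloring (Fin (q + 2)))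

lemma forbidden_card [DecidableEq V] (e : G.edgeSet) :
    (univ.filter (fun a => a ∉ Sym2.map c (e : Sym2 V))).card = q := by
  obtain ⟨e, he⟩ := e
  induction e with
  | _ u v =>
    have hne : c u ≠ c v := c.valid he
    have h2 : (univ.filter (fun a => a ∈ Sym2.map c s(u, v))) = {c u, c v} := by
      ext a; simp [Sym2.mem_iff]
    rw [filter_not, h2, card_sdiff_of_subset (subset_univ _), card_univ, Fintype.card_fin,
      card_insert_of_notMem (by simpa using hne), card_singleton]
    omega

noncomputable def edgeCoronaColoring : (edgeCorona G q).Coloring (Fin (q + 2)) := by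
  classical
  refine SimpleGraph.Coloring.mk (fun x => match x with
    | Sum.inl u => c u
    | Sum.inr p => ((univ.filter
        (fun a => a ∉ Sym2.map c (p.1 : Sym2 V))).orderIsoOfFin (forbidden_card G q c p.1)
        p.2 : Fin (q+2))) ?_
  rintro (u | p) (v | r) h
  · exact c.valid h
  · intro hcol
    dsimp only at hcol
    have hm := ((univ.filter
        (fun a => a ∉ Sym2.map c (r.1 : Sym2 V))).orderIsoOfFin (forbidden_card G q c r.1)
        r.2).2
    rw [mem_filter, ← hcol] at hm
    exact hm.2 (Sym2.mem_map.2 ⟨_, h, rfl⟩)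
  · intro hcol
    dsimp only at hcol
    have hm := ((univ.filter
        (fun a => a ∉ Sym2.map c (p.1 : Sym2 V))).orderIsoOfFin (forbidden_card G q c p.1)
        p.2).2
    rw [mem_filter, hcol] at hm
    exact hm.2 (Sym2.mem_map.2 ⟨_, h, rfl⟩)
  · obtain ⟨he, hne⟩ := h
    obtain ⟨e1, i⟩ := p
    obtain ⟨e2, j⟩ := r
    simp only at he hne ⊢
    subst he
    intro hcol
    exact hne ((Finset.orderIsoOfFin _ (forbidden_card G q c e1)).injective
        (Subtype.ext hcol))

end aux

lemma hub_adj (q : ℕ) : ∀ (g : ℕ) {j k : Fin (q + 2)}, j ≠ k →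
    (Gnet q g).Adj (hub q g j) (hub q g k)
  | 0, j, k, h => h
  | g + 1, j, k, h => hub_adj q g h

lemma hub_inj (q g : ℕ) : Function.Injective (hub q g) := by
  intro j k h
  by_contra hne
  exact (Gnet q g).loopless.irrefl _ (h ▸ hub_adj q g hne)

def hubEmb (q g : ℕ) : (⊤ : SimpleGraph (Fin (q + 2))) ↪g Gnet q g where
  toFun := hub q g
  inj' := hub_inj q g
  map_rel_iff' := by
    intro j k
    constructor
    · intro h
      exact fun he => (Gnet q g).loopless.irrefl _ (he ▸ h)
    · exact fun h => hub_adj q g h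

lemma gnet_colorable (q g : ℕ) : (Gnet q g).Colorable (q + 2) := by
  classical
  induction g with
  | zero =>
    exact (by simpa using (⊤ : SimpleGraph (Fin (q + 2))).colorable_of_fintype :
      (⊤ : SimpleGraph (Fin (q + 2))).Colorable (q + 2))
  | succ g ih =>
    exact ⟨edgeCoronaColoring (Gnet q g) q ih.some⟩

/-- For all `g ≥ 0`, `q ≥ 1`, the chromatic number of `G_q(g)` is `q+2`. -/
theorem chromaticNumber_Gnet (q g : ℕ) (hq : 1 ≤ q) :
    (Gnet q g).chromaticNumber = (q + 2 : ℕ) := by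
  refine le_antisymm ((gnet_colorable q g).chromaticNumber_le) ?_
  have h := SimpleGraph.chromaticNumber_mono_of_hom (hubEmb q g).toHom
  rwa [SimpleGraph.chromaticNumber_top, Fintype.card_fin] at h
end

section
/- For all g ≥ 0 and q ≥ 1, the number of root-connected acyclic orientations of G_q(g) equals ((q+1)!)^{E(g,q)}, where E(g,q) = (2/(q(q+3))) · ((q+1)(q+2)/2)^{g+1} − 2/(q(q+3)). -/
/-- The exponent `E(g,q) = (2/(q(q+3))) · ((q+1)(q+2)/2)^{g+1} − 2/(q(q+3))`,
a natural number (the division is exact). -/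
def expE (q g : ℕ) : ℕ :=
  (2 * (((q + 1) * (q + 2) / 2) ^ (g + 1) - 1)) / (q * (q + 3))

/-- An acyclic orientation of a graph `G`: a choice of direction for every edge
such that the resulting directed graph has no directed cycle. -/
structure AcyclicOrientation {V : Type} (G : SimpleGraph V) where
  /-- the chosen direction relation -/
  dir : V → V → Prop
  dir_adj : ∀ u v, dir u v → G.Adj u v
  adj_dir : ∀ u v, G.Adj u v → dir u v ∨ dir v u
  asymm : ∀ u v, dir u v → ¬ dir v u
  acyclic : Irreflexive (Relation.TransGen dir)

section Rank
variable {α : Type} [Fintype α] {d : α → α → Prop}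

/-- From an acyclic tournament, a rank equivalence to `Fin n` with the sink at 0. -/
theorem exists_rank (total : ∀ a b : α, a ≠ b → d a b ∨ d b a)
    (hasymm : ∀ a b, d a b → ¬ d b a)
    (acyc : Irreflexive (Relation.TransGen d)) {n : ℕ} (hn : Fintype.card α = n) :
    ∃ rank : α ≃ Fin n, ∀ a b, d a b ↔ rank b < rank a := by
  classical
  have dtrans : ∀ a b c : α, d a b → d b c → d a c := by
    intro a b c hab hbc
    rcases eq_or_ne a c with rfl | hne
    · exact absurd hbc (hasymm _ _ hab)
    rcases total a c hne with h | h
    · exact h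
    · exact absurd (((Relation.TransGen.single hab).tail hbc).tail h)
        (fun hh => acyc a hh)
  let r : α → α → Prop := fun a b => d b a
  haveI : IsTrichotomous α r := ⟨by
    intro a b hab hba
    by_contra hne
    rcases total a b hne with h | h
    · exact hba h
    · exact hab h⟩
  haveI : IsTrans α r := ⟨fun a b c hab hbc => dtrans c b a hbc hab⟩
  haveI : IsIrrefl α r := ⟨fun a h => hasymm a a h h⟩
  haveI : IsStrictTotalOrder α r := {}
  letI : LinearOrder α := linearOrderOfSTO r
  have hlt : ∀ a b : α, a < b ↔ r a b := fun a b => Iff.rfl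
  let e : Fin n ≃o α := monoEquivOfFin α hn
  refine ⟨e.symm.toEquiv, ?_⟩
  intro a b
  have h2 : e.symm.toEquiv b < e.symm.toEquiv a ↔ b < a := e.symm.lt_iff_lt
  rw [h2, hlt]

/-- Two equivalences to `Fin n` inducing the same strict order are equal. -/
theorem equiv_fin_unique {n : ℕ} (f g : α ≃ Fin n)
    (h : ∀ a b, f a < f b ↔ g a < g b) : f = g := by
  classical
  have key : ∀ a, (f a : ℕ) = (g a : ℕ) := by
    intro a
    have hf : ∀ (f : α ≃ Fin n), Nat.card {b // f b < f a} = ((f : α ≃ Fin n) a : ℕ) := by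
      intro f
      have e1 : {b // f b < f a} ≃ {j : Fin n // j < f a} :=
        f.subtypeEquiv (fun b => Iff.rfl)
      rw [Nat.card_congr e1]
      have : Nat.card {j : Fin n // j < f a} = Fintype.card (Set.Iio (f a)) := by
        rw [Nat.card_eq_fintype_card]; exact Fintype.card_congr (Equiv.refl _)
      rw [this, Fintype.card_Iio, Fin.card_Iio]
    have := (hf f).symm.trans
      ((Nat.card_congr (Equiv.subtypeEquivRight (fun b => h b a))).trans (hf g))
    exact this
  ext a
  exact key a

end Rank

theorem AcyclicOrientation.ext' {V : Type} {G : SimpleGraph V}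
    {o o' : AcyclicOrientation G} (h : o.dir = o'.dir) : o = o' := by
  cases o; cases o'; cases h; rfl

theorem transGen_le_of_trans {α : Type*} {r s : α → α → Prop}
    (h : ∀ a b, r a b → s a b) (ht : Transitive s) :
    ∀ a b, Relation.TransGen r a b → s a b := by
  intro a b hab
  induction hab with
  | single h' => exact h _ _ h'
  | tail _ h' ih => exact ht ih (h _ _ h')

/-- Orientation of the complete graph induced by a ranking. -/
def ofRank {n : ℕ} (f : Fin (n+1) ≃ Fin (n+1)) :
    AcyclicOrientation (⊤ : SimpleGraph (Fin (n+1))) where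
  dir a b := f b < f a
  dir_adj a b h := by
    rw [SimpleGraph.top_adj]
    rintro rfl; exact lt_irrefl _ h
  adj_dir a b h := by
    rw [SimpleGraph.top_adj] at h
    rcases lt_or_gt_of_ne (fun hc => h (f.injective hc) : f a ≠ f b) with h' | h'
    · exact Or.inr h'
    · exact Or.inl h'
  asymm a b h := by exact fun h' => lt_asymm h h'
  acyclic x hx :=
    lt_irrefl (f x) (transGen_le_of_trans (s := fun a b => f b < f a)
      (fun _ _ hh => hh) (fun _ _ _ h1 h2 => lt_trans h2 h1) x x hx)

theorem card_fiber_perm (n : ℕ) (r : Fin (n+1)) (z z' : Fin (n+1)) :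
    Nat.card {f : Fin (n+1) ≃ Fin (n+1) // f r = z}
      = Nat.card {f : Fin (n+1) ≃ Fin (n+1) // f r = z'} := by
  refine Nat.card_congr (Equiv.subtypeEquiv
    (Equiv.equivCongr (Equiv.refl _) (Equiv.swap z z')) ?_)
  intro f
  simp only [Equiv.equivCongr_apply_apply, Equiv.refl_symm, Equiv.refl_apply]
  constructor
  · rintro rfl; exact Equiv.swap_apply_left _ _
  · intro h
    have := congrArg (Equiv.swap z z') h
    rwa [Equiv.swap_apply_self, Equiv.swap_apply_right] at this

theorem card_perm_fix (n : ℕ) (r : Fin (n+1)) :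
    Nat.card {f : Fin (n+1) ≃ Fin (n+1) // f r = 0} = n.factorial := by
  classical
  have hsig : Nat.card (Fin (n+1) ≃ Fin (n+1))
      = ∑ z : Fin (n+1), Nat.card {f : Fin (n+1) ≃ Fin (n+1) // f r = z} := by
    rw [Nat.card_congr (Equiv.sigmaFiberEquiv (fun f : Fin (n+1) ≃ Fin (n+1) => f r)).symm]
    rw [Nat.card_eq_fintype_card, Fintype.card_sigma]
    exact Finset.sum_congr rfl (fun z _ => (Nat.card_eq_fintype_card).symm)
  have hconst : ∀ z : Fin (n+1),
      Nat.card {f : Fin (n+1) ≃ Fin (n+1) // f r = z}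
        = Nat.card {f : Fin (n+1) ≃ Fin (n+1) // f r = 0} :=
    fun z => card_fiber_perm n r z 0
  rw [Finset.sum_congr rfl (fun z _ => hconst z), Finset.sum_const, Finset.card_univ,
    Fintype.card_fin, smul_eq_mul] at hsig
  have htot : Nat.card (Fin (n+1) ≃ Fin (n+1)) = (n+1).factorial := by
    rw [Nat.card_eq_fintype_card, Fintype.card_equiv (Equiv.refl _), Fintype.card_fin]
  rw [htot, Nat.factorial_succ] at hsig
  exact (Nat.eq_of_mul_eq_mul_left (Nat.succ_pos n) hsig.symm)


def toRootedTop (n : ℕ) (r : Fin (n+1))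
    (f : {f : Fin (n+1) ≃ Fin (n+1) // f r = 0}) :
    {o : AcyclicOrientation (⊤ : SimpleGraph (Fin (n+1))) //
      ∀ v, v ≠ r → Relation.TransGen o.dir v r} := by
  refine ⟨ofRank f.1, fun v hv => Relation.TransGen.single ?_⟩
  show f.1 r < f.1 v
  rw [f.2]
  exact Fin.pos_of_ne_zero (fun hc => hv (f.1.injective (hc.trans f.2.symm)))

theorem card_rooted_complete (n : ℕ) (r : Fin (n+1)) :
    Nat.card {o : AcyclicOrientation (⊤ : SimpleGraph (Fin (n+1))) //
      ∀ v, v ≠ r → Relation.TransGen o.dir v r} = n.factorial := by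
  classical
  rw [← card_perm_fix n r]
  refine (Nat.card_eq_of_bijective (toRootedTop n r) ⟨?_, ?_⟩).symm
  · rintro ⟨f, hf⟩ ⟨g, hg⟩ h
    have hd := congrArg (fun x => (x : {o : AcyclicOrientation (⊤ : SimpleGraph (Fin (n+1))) //
      ∀ v, v ≠ r → Relation.TransGen o.dir v r}).1.dir) h
    refine Subtype.ext (equiv_fin_unique f g (fun a b => ?_))
    exact iff_of_eq (congrFun (congrFun hd b) a)
  · rintro ⟨o, ho⟩
    have total : ∀ a b : Fin (n+1), a ≠ b → o.dir a b ∨ o.dir b a :=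
      fun a b h => o.adj_dir a b ((SimpleGraph.top_adj a b).mpr h)
    obtain ⟨rank, hrank⟩ := exists_rank total o.asymm o.acyclic (Fintype.card_fin (n+1))
    have h0 : rank r = 0 := by
      have hle : ∀ v, rank r ≤ rank v := by
        intro v
        rcases eq_or_ne v r with rfl | hv
        · exact le_refl _
        · have hvr : o.dir v r := by
            rcases total v r hv with h | h
            · exact h
            · exact absurd ((ho v hv).tail h) (fun hh => o.acyclic v hh)
          exact le_of_lt ((hrank v r).mp hvr)
      have := hle (rank.symm 0)
      rw [Equiv.apply_symm_apply] at this
      exact le_antisymm this (Fin.zero_le _)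
    refine ⟨⟨rank, h0⟩, ?_⟩
    refine Subtype.ext (AcyclicOrientation.ext' ?_)
    funext a b
    exact propext ((hrank a b).symm)

section Corona

variable {V : Type} {G : SimpleGraph V} {q : ℕ}

open scoped Classical

theorem exists_dir_pair (o : AcyclicOrientation G) (e : G.edgeSet) :
    ∃ p : V × V, (e : Sym2 V) = s(p.1, p.2) ∧ o.dir p.1 p.2 := by
  obtain ⟨⟨a, b⟩, h⟩ := Quot.exists_rep (e : Sym2 V)
  have he : (e : Sym2 V) = s(a, b) := h.symm
  have hadj : G.Adj a b := by
    rw [← SimpleGraph.mem_edgeSet, ← he]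
    exact e.2
  rcases o.adj_dir a b hadj with hd | hd
  · exact ⟨(a, b), he, hd⟩
  · exact ⟨(b, a), by rw [he, Sym2.eq_swap], hd⟩

noncomputable def topOf (o : AcyclicOrientation G) (e : G.edgeSet) : V :=
  (Classical.choose (exists_dir_pair o e)).1

noncomputable def botOf (o : AcyclicOrientation G) (e : G.edgeSet) : V :=
  (Classical.choose (exists_dir_pair o e)).2

theorem topBot_spec (o : AcyclicOrientation G) (e : G.edgeSet) :
    (e : Sym2 V) = s(topOf o e, botOf o e) ∧ o.dir (topOf o e) (botOf o e) :=
  Classical.choose_spec (exists_dir_pair o e)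

theorem topOf_ne_botOf (o : AcyclicOrientation G) (e : G.edgeSet) :
    topOf o e ≠ botOf o e :=
  (o.dir_adj _ _ (topBot_spec o e).2).ne

theorem mem_edge_iff (o : AcyclicOrientation G) (e : G.edgeSet) (x : V) :
    x ∈ (e : Sym2 V) ↔ x = topOf o e ∨ x = botOf o e := by
  rw [(topBot_spec o e).1, Sym2.mem_iff]

theorem eq_top_bot_of_dir (o : AcyclicOrientation G) (e : G.edgeSet) {u v : V}
    (he : (e : Sym2 V) = s(u, v)) (hd : o.dir u v) :
    u = topOf o e ∧ v = botOf o e := by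
  have h2 := (topBot_spec o e).1
  rw [he, Sym2.eq_iff] at h2
  rcases h2 with ⟨rfl, rfl⟩ | ⟨rfl, rfl⟩
  · exact ⟨rfl, rfl⟩
  · exact absurd (topBot_spec o e).2 (o.asymm _ _ hd)

theorem adj_of_mem_edge (e : G.edgeSet) {x y : V}
    (hx : x ∈ (e : Sym2 V)) (hy : y ∈ (e : Sym2 V)) (hxy : x ≠ y) : G.Adj x y := by
  obtain ⟨⟨a, b⟩, h⟩ := Quot.exists_rep (e : Sym2 V)
  have he : (e : Sym2 V) = s(a, b) := h.symm
  have hadj : G.Adj a b := by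
    rw [← SimpleGraph.mem_edgeSet, ← he]
    exact e.2
  rw [he, Sym2.mem_iff] at hx hy
  rcases hx with rfl | rfl <;> rcases hy with rfl | rfl
  · exact absurd rfl hxy
  · exact hadj
  · exact hadj.symm
  · exact absurd rfl hxy

/-- Heights within each added clique. -/
def hIn (τ : ∀ _ : G.edgeSet, (Unit ⊕ Fin q) ≃ Fin (q+1)) (e : G.edgeSet) (i : Fin q) : ℕ :=
  (τ e (Sum.inr i) : ℕ) + 1

noncomputable def hVx (o : AcyclicOrientation G)
    (τ : ∀ _ : G.edgeSet, (Unit ⊕ Fin q) ≃ Fin (q+1)) (e : G.edgeSet) (u : V) : ℕ :=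
  if u = topOf o e then (τ e (Sum.inl ()) : ℕ) + 1 else 0

/-- The direction relation of the orientation of the edge corona. -/
noncomputable def coronaDir (o : AcyclicOrientation G)
    (τ : ∀ _ : G.edgeSet, (Unit ⊕ Fin q) ≃ Fin (q+1)) :
    (V ⊕ (G.edgeSet × Fin q)) → (V ⊕ (G.edgeSet × Fin q)) → Prop
  | Sum.inl u, Sum.inl v => o.dir u v
  | Sum.inl u, Sum.inr p => u ∈ (p.1 : Sym2 V) ∧ hIn τ p.1 p.2 < hVx o τ p.1 u
  | Sum.inr p, Sum.inl v => v ∈ (p.1 : Sym2 V) ∧ hVx o τ p.1 v < hIn τ p.1 p.2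
  | Sum.inr p, Sum.inr r => p.1 = r.1 ∧ hIn τ r.1 r.2 < hIn τ p.1 p.2

section Forward
variable (o : AcyclicOrientation G) (τ : ∀ _ : G.edgeSet, (Unit ⊕ Fin q) ≃ Fin (q+1))

theorem coronaDir_top (e : G.edgeSet) {u : V} {i : Fin q}
    (h : coronaDir o τ (Sum.inl u) (Sum.inr (e, i))) : u = topOf o e := by
  obtain ⟨hm, hlt⟩ := h
  by_contra hne
  simp only [hVx, hIn] at hlt
  rw [if_neg hne] at hlt
  omega

/-- The measure used to prove acyclicity. -/
noncomputable def coronaMeasure : (V ⊕ (G.edgeSet × Fin q)) → V × ℕ × ℕ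
  | Sum.inl u => (u, 1, 0)
  | Sum.inr p => (topOf o p.1,
      if (τ p.1 (Sum.inl ()) : ℕ) < (τ p.1 (Sum.inr p.2) : ℕ) then 2 else 0,
      (τ p.1 (Sum.inr p.2) : ℕ))

def measureRel (o : AcyclicOrientation G) : V × ℕ × ℕ → V × ℕ × ℕ → Prop :=
  fun a b => Relation.TransGen o.dir a.1 b.1 ∨
    (a.1 = b.1 ∧ (b.2.1 < a.2.1 ∨ (a.2.1 = b.2.1 ∧ b.2.2 < a.2.2)))

theorem measureRel_trans : Transitive (measureRel o) := by
  rintro a b c (h1 | ⟨h1, h1p⟩) (h2 | ⟨h2, h2p⟩)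
  · exact Or.inl (h1.trans h2)
  · exact Or.inl (h2 ▸ h1)
  · exact Or.inl (h1 ▸ h2)
  · exact Or.inr ⟨h1.trans h2, by omega⟩

theorem measureRel_irrefl : ∀ a, ¬ measureRel o a a := by
  rintro a (h | ⟨-, h⟩)
  · exact o.acyclic _ h
  · omega

theorem coronaDir_measure : ∀ x y, coronaDir o τ x y →
    measureRel o (coronaMeasure o τ x) (coronaMeasure o τ y) := by
  rintro (u | ⟨e, i⟩) (v | ⟨f, j⟩) h
  · exact Or.inl (Relation.TransGen.single h)
  · have hu : u = topOf o f := coronaDir_top o τ f h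
    obtain ⟨hm, hlt⟩ := h
    simp only [hVx, hIn] at hlt
    rw [if_pos hu] at hlt
    refine Or.inr ⟨hu, Or.inl ?_⟩
    simp only [coronaMeasure]
    rw [if_neg (by omega)]
    omega
  · obtain ⟨hm, hlt⟩ := h
    rcases (mem_edge_iff o e v).mp hm with rfl | rfl
    · simp only [hVx, hIn, if_true] at hlt
      refine Or.inr ⟨rfl, Or.inl ?_⟩
      simp only [coronaMeasure]
      rw [if_pos (by omega)]
      omega
    · exact Or.inl (Relation.TransGen.single (topBot_spec o e).2)
  · obtain ⟨hm, hlt⟩ := h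
    obtain rfl : e = f := hm
    refine Or.inr ⟨rfl, ?_⟩
    simp only [hIn] at hlt
    simp only [coronaMeasure]
    split_ifs with h1 h2 h2 <;> omega

theorem tau_ne (e : G.edgeSet) (i : Fin q) :
    (τ e (Sum.inr i) : ℕ) ≠ (τ e (Sum.inl ()) : ℕ) := by
  intro hc
  have := (τ e).injective (Fin.ext hc)
  simp at this

theorem hVx_top (e : G.edgeSet) :
    hVx o τ e (topOf o e) = (τ e (Sum.inl ()) : ℕ) + 1 := if_pos rfl

theorem hVx_bot (e : G.edgeSet) : hVx o τ e (botOf o e) = 0 :=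
  if_neg (fun hc => topOf_ne_botOf o e hc.symm)

/-- The orientation of the edge corona induced by `(o, τ)`. -/
noncomputable def coronaOrient : AcyclicOrientation (edgeCorona G q) where
  dir := coronaDir o τ
  dir_adj := by
    rintro (u | ⟨e, i⟩) (v | ⟨f, j⟩) h
    · exact o.dir_adj u v h
    · exact h.1
    · exact h.1
    · refine ⟨h.1, fun hji => ?_⟩
      obtain ⟨h1, h2⟩ := h
      obtain rfl : e = f := h1
      rw [hji] at h2
      exact lt_irrefl _ h2
  adj_dir := by
    rintro (u | ⟨e, i⟩) (v | ⟨f, j⟩) h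
    · exact o.adj_dir u v h
    · rcases (mem_edge_iff o f u).mp h with hu | hu
      · rcases lt_or_gt_of_ne (tau_ne τ f j) with hlt | hlt
        · exact Or.inl ⟨h, by simp only [hIn, hVx]; rw [if_pos hu]; omega⟩
        · exact Or.inr ⟨h, by simp only [hIn, hVx]; rw [if_pos hu]; omega⟩
      · exact Or.inr ⟨h, by
          simp only [hIn, hVx]
          rw [if_neg (by rw [hu]; exact fun hc => (topOf_ne_botOf o f) hc.symm)]; omega⟩
    · rcases (mem_edge_iff o e v).mp h with hv | hv
      · rcases lt_or_gt_of_ne (tau_ne τ e i) with hlt | hlt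
        · exact Or.inr ⟨h, by simp only [hIn, hVx]; rw [if_pos hv]; omega⟩
        · exact Or.inl ⟨h, by simp only [hIn, hVx]; rw [if_pos hv]; omega⟩
      · exact Or.inl ⟨h, by
          simp only [hIn, hVx]
          rw [if_neg (by rw [hv]; exact fun hc => (topOf_ne_botOf o e) hc.symm)]; omega⟩
    · obtain ⟨hef, hij⟩ := h
      obtain rfl : e = f := hef
      have hne : (τ e (Sum.inr i) : ℕ) ≠ (τ e (Sum.inr j) : ℕ) := by
        intro hc
        have := (τ e).injective (Fin.ext hc)
        simp only [Sum.inr.injEq] at this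
        exact hij this
      rcases lt_or_gt_of_ne hne with hlt | hlt
      · exact Or.inr ⟨rfl, by simp only [hIn]; omega⟩
      · exact Or.inl ⟨rfl, by simp only [hIn]; omega⟩
  asymm := by
    rintro (u | ⟨e, i⟩) (v | ⟨f, j⟩) h hp
    · exact o.asymm u v h hp
    · exact lt_asymm h.2 hp.2
    · exact lt_asymm h.2 hp.2
    · exact lt_asymm h.2 hp.2
  acyclic := by
    intro x hx
    exact measureRel_irrefl o _
      (transGen_le_of_trans (coronaDir_measure o τ)
        (fun a b c hab hbc => measureRel_trans o hab hbc) x x hx)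

theorem coronaOrient_rooted (root : V)
    (ho : ∀ v, v ≠ root → Relation.TransGen o.dir v root) :
    ∀ x, x ≠ Sum.inl root →
      Relation.TransGen (coronaOrient o τ).dir x (Sum.inl root) := by
  have hlift : ∀ {a b : V}, Relation.TransGen o.dir a b →
      Relation.TransGen (coronaOrient o τ).dir (Sum.inl a) (Sum.inl b) := by
    intro a b h
    exact Relation.TransGen.lift Sum.inl (fun x y hxy => hxy) _ _ h
  rintro (u | ⟨e, i⟩) hx
  · exact hlift (ho u (fun hc => hx (by rw [hc])))
  · have hstep : (coronaOrient o τ).dir (Sum.inr (e, i)) (Sum.inl (botOf o e)) := by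
      refine ⟨(mem_edge_iff o e _).mpr (Or.inr rfl), ?_⟩
      simp only [hIn, hVx]
      rw [if_neg (fun hc => (topOf_ne_botOf o e) hc.symm)]
      omega
    rcases eq_or_ne (botOf o e) root with hb | hb
    · exact Relation.TransGen.single (hb ▸ hstep)
    · exact (Relation.TransGen.single hstep).trans (hlift (ho _ hb))

end Forward

section Backward
variable (O : AcyclicOrientation (edgeCorona G q))

def restrictOrient : AcyclicOrientation G where
  dir u v := O.dir (Sum.inl u) (Sum.inl v)
  dir_adj u v h := O.dir_adj _ _ h
  adj_dir u v h := O.adj_dir (Sum.inl u) (Sum.inl v) h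
  asymm u v h := O.asymm _ _ h
  acyclic x hx := O.acyclic _ (Relation.TransGen.lift Sum.inl (fun a b hh => hh) _ _ hx)

theorem project (y : V) :
    ∀ {z}, Relation.TransGen O.dir z (Sum.inl y) →
      (∀ x, z = Sum.inl x → Relation.TransGen (restrictOrient O).dir x y) ∧
      (∀ p : G.edgeSet × Fin q, z = Sum.inr p → ∃ b, b ∈ (p.1 : Sym2 V) ∧
        Relation.ReflTransGen (restrictOrient O).dir b y ∧
        Relation.TransGen O.dir (Sum.inr p) (Sum.inl b)) := by
  intro z h
  induction h using Relation.TransGen.head_induction_on with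
  | single h' =>
    rename_i z'
    constructor
    · rintro x rfl
      exact Relation.TransGen.single h'
    · rintro ⟨e, i⟩ rfl
      exact ⟨y, O.dir_adj _ _ h', Relation.ReflTransGen.refl, Relation.TransGen.single h'⟩
  | @head z' w h' hrest ihc =>
    constructor
    · rintro x rfl
      rcases w with v | p
      · exact Relation.TransGen.head h' (ihc.1 v rfl)
      · obtain ⟨b, hb, hby, hreach⟩ := ihc.2 p rfl
        have hxb : x ≠ b := by
          rintro rfl
          exact O.acyclic _ (Relation.TransGen.head h' hreach)
        have hmemx : x ∈ (p.1 : Sym2 V) := O.dir_adj _ _ h'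
        have hadj : G.Adj x b := adj_of_mem_edge p.1 hmemx hb hxb
        have hdir : (restrictOrient O).dir x b := by
          rcases (restrictOrient O).adj_dir x b hadj with hd | hd
          · exact hd
          · exact absurd ((Relation.TransGen.head h' hreach).tail hd) (O.acyclic _)
        exact Relation.TransGen.trans_left (Relation.TransGen.single hdir) hby
    · rintro ⟨e, i⟩ rfl
      rcases w with v | p
      · refine ⟨v, O.dir_adj _ _ h', (ihc.1 v rfl).to_reflTransGen, Relation.TransGen.single h'⟩
      · obtain ⟨b, hb, hby, hreach⟩ := ihc.2 p rfl
        have hef : (e, i).1 = p.1 := (O.dir_adj _ _ h').1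
        refine ⟨b, ?_, hby, hreach.head h'⟩
        rw [hef]
        exact hb

theorem restrict_rooted (root : V)
    (hO : ∀ x, x ≠ Sum.inl root → Relation.TransGen O.dir x (Sum.inl root)) :
    ∀ v, v ≠ root → Relation.TransGen (restrictOrient O).dir v root := by
  intro v hv
  exact (project O root (hO (Sum.inl v) (fun hc => hv (Sum.inl.inj hc)))).1 v rfl

/-- Every internal vertex of the clique over `e` points to the bottom endpoint. -/
theorem sink_bot (root : V)
    (hO : ∀ x, x ≠ Sum.inl root → Relation.TransGen O.dir x (Sum.inl root))
    (e : G.edgeSet) (i : Fin q) :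
    O.dir (Sum.inr (e, i)) (Sum.inl (botOf (restrictOrient O) e)) := by
  classical
  set o := restrictOrient O with ho
  let emb : Unit ⊕ Unit ⊕ Fin q → V ⊕ (G.edgeSet × Fin q) := fun k =>
    match k with
    | Sum.inl _ => Sum.inl (topOf o e)
    | Sum.inr (Sum.inl _) => Sum.inl (botOf o e)
    | Sum.inr (Sum.inr j) => Sum.inr (e, j)
  let c : (Unit ⊕ Unit ⊕ Fin q) → (Unit ⊕ Unit ⊕ Fin q) → Prop :=
    fun a b => O.dir (emb a) (emb b)
  have hadj : ∀ a b, a ≠ b → (edgeCorona G q).Adj (emb a) (emb b) := by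
    have htop : topOf o e ∈ (e : Sym2 V) := (mem_edge_iff o e _).mpr (Or.inl rfl)
    have hbot : botOf o e ∈ (e : Sym2 V) := (mem_edge_iff o e _).mpr (Or.inr rfl)
    have htb : G.Adj (topOf o e) (botOf o e) := o.dir_adj _ _ (topBot_spec o e).2
    rintro (⟨⟩ | ⟨⟩ | j) (⟨⟩ | ⟨⟩ | j') hne
    · exact absurd rfl hne
    · exact htb
    · exact htop
    · exact htb.symm
    · exact absurd rfl hne
    · exact hbot
    · exact htop
    · exact hbot
    · exact ⟨rfl, fun hc => hne (congrArg (fun t : Fin q =>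
        (Sum.inr (Sum.inr t) : Unit ⊕ Unit ⊕ Fin q)) hc)⟩
  have total : ∀ a b, a ≠ b → c a b ∨ c b a := fun a b hne =>
    O.adj_dir _ _ (hadj a b hne)
  have hasymm : ∀ a b, c a b → ¬ c b a := fun a b h h' => O.asymm _ _ h h'
  have hacyc : Irreflexive (Relation.TransGen c) := by
    intro a ha
    exact O.acyclic _ (Relation.TransGen.lift emb (fun x y hxy => hxy) _ _ ha)
  obtain ⟨rank, hrank⟩ := exists_rank total hasymm hacyc
    (by simp only [Fintype.card_sum, Fintype.card_unit, Fintype.card_fin]; omega :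
      Fintype.card (Unit ⊕ Unit ⊕ Fin q) = q + 2)
  obtain ⟨m, hm0⟩ : ∃ m, rank m = 0 := ⟨rank.symm 0, by simp⟩
  have hmin : ∀ b, ¬ c m b := by
    intro b hcb
    have := (hrank m b).mp hcb
    rw [hm0] at this
    exact absurd this (Fin.not_lt_zero _)
  have hm : m = Sum.inr (Sum.inl ()) := by
    rcases m with ⟨⟩ | ⟨⟩ | j
    · exact absurd (topBot_spec o e).2 (hmin (Sum.inr (Sum.inl ())))
    · rfl
    · exfalso
      have hstep := hO (Sum.inr (e, j)) (fun hc => by simp at hc)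
      obtain ⟨w, hw, -⟩ := Relation.TransGen.head'_iff.mp hstep
      rcases w with v | p'
      · have hv : v ∈ (e : Sym2 V) := O.dir_adj _ _ hw
        rcases (mem_edge_iff o e v).mp hv with rfl | rfl
        · exact hmin (Sum.inl ()) hw
        · exact hmin (Sum.inr (Sum.inl ())) hw
      · obtain ⟨e', j'⟩ := p'
        obtain rfl : e = e' := (O.dir_adj _ _ hw).1
        exact hmin (Sum.inr (Sum.inr j')) hw
  subst hm
  refine (hrank (Sum.inr (Sum.inr i)) (Sum.inr (Sum.inl ()))).mpr ?_
  rw [hm0]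
  exact Fin.pos_of_ne_zero (fun hc => by
    have := rank.injective (hc.trans hm0.symm)
    simp at this)

/-- The clique over an edge, minus the bottom vertex. -/
noncomputable def cliqueEmb (e : G.edgeSet) :
    Unit ⊕ Fin q → V ⊕ (G.edgeSet × Fin q) := fun a =>
  match a with
  | Sum.inl _ => Sum.inl (topOf (restrictOrient O) e)
  | Sum.inr i => Sum.inr (e, i)

theorem exists_tau (e : G.edgeSet) :
    ∃ t : (Unit ⊕ Fin q) ≃ Fin (q+1), ∀ a b,
      O.dir (cliqueEmb O e a) (cliqueEmb O e b) ↔ t b < t a := by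
  classical
  set o := restrictOrient O with ho
  have htop : topOf o e ∈ (e : Sym2 V) := (mem_edge_iff o e _).mpr (Or.inl rfl)
  have hadj : ∀ a b : Unit ⊕ Fin q, a ≠ b →
      (edgeCorona G q).Adj (cliqueEmb O e a) (cliqueEmb O e b) := by
    rintro (⟨⟩ | j) (⟨⟩ | j') hne
    · exact absurd rfl hne
    · exact htop
    · exact htop
    · exact ⟨rfl, fun hc => hne (congrArg (fun t : Fin q =>
        (Sum.inr t : Unit ⊕ Fin q)) hc)⟩
  have total : ∀ a b, a ≠ b →
      O.dir (cliqueEmb O e a) (cliqueEmb O e b) ∨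
      O.dir (cliqueEmb O e b) (cliqueEmb O e a) := fun a b hne =>
    O.adj_dir _ _ (hadj a b hne)
  have hasymm : ∀ a b, O.dir (cliqueEmb O e a) (cliqueEmb O e b) →
      ¬ O.dir (cliqueEmb O e b) (cliqueEmb O e a) := fun a b h h' => O.asymm _ _ h h'
  have hacyc : Irreflexive (Relation.TransGen
      (fun a b => O.dir (cliqueEmb O e a) (cliqueEmb O e b))) := by
    intro a ha
    exact O.acyclic _ (Relation.TransGen.lift (cliqueEmb O e) (fun x y hxy => hxy) _ _ ha)
  obtain ⟨rank, hrank⟩ := exists_rank total hasymm hacyc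
    (by simp only [Fintype.card_sum, Fintype.card_unit, Fintype.card_fin]; omega :
      Fintype.card (Unit ⊕ Fin q) = q + 1)
  exact ⟨rank, hrank⟩

end Backward

theorem corona_card (root : V) :
    Nat.card {O : AcyclicOrientation (edgeCorona G q) //
        ∀ x, x ≠ Sum.inl root → Relation.TransGen O.dir x (Sum.inl root)} =
      Nat.card ({o : AcyclicOrientation G //
          ∀ v, v ≠ root → Relation.TransGen o.dir v root} ×
        (G.edgeSet → ((Unit ⊕ Fin q) ≃ Fin (q+1)))) := by
  classical
  refine (Nat.card_eq_of_bijective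
    (fun z => ⟨coronaOrient z.1.1 z.2, coronaOrient_rooted z.1.1 z.2 root z.1.2⟩)
    ⟨?_, ?_⟩).symm
  · rintro ⟨⟨o, ho⟩, τ⟩ ⟨⟨o', ho'⟩, τ'⟩ h
    have hd : coronaDir o τ = coronaDir o' τ' :=
      congrArg (fun z => (z : {O : AcyclicOrientation (edgeCorona G q) //
        ∀ x, x ≠ Sum.inl root → Relation.TransGen O.dir x (Sum.inl root)}).1.dir) h
    have hoo : o = o' := AcyclicOrientation.ext' (funext fun u => funext fun v =>
      propext (iff_of_eq (congrFun (congrFun hd (Sum.inl u)) (Sum.inl v))))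
    subst hoo
    have key1 : ∀ (τ₀ : ∀ _ : G.edgeSet, (Unit ⊕ Fin q) ≃ Fin (q+1))
        (e : G.edgeSet) (i j : Fin q),
        ((τ₀ e (Sum.inr i) : ℕ) < (τ₀ e (Sum.inr j) : ℕ)) ↔
          coronaDir o τ₀ (Sum.inr (e, j)) (Sum.inr (e, i)) := by
      intro τ₀ e i j
      constructor
      · intro hlt
        exact ⟨rfl, by simp only [hIn]; omega⟩
      · rintro ⟨-, hlt⟩
        simp only [hIn] at hlt
        omega
    have key2 : ∀ (τ₀ : ∀ _ : G.edgeSet, (Unit ⊕ Fin q) ≃ Fin (q+1))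
        (e : G.edgeSet) (j : Fin q),
        ((τ₀ e (Sum.inl ()) : ℕ) < (τ₀ e (Sum.inr j) : ℕ)) ↔
          coronaDir o τ₀ (Sum.inr (e, j)) (Sum.inl (topOf o e)) := by
      intro τ₀ e j
      constructor
      · intro hlt
        exact ⟨(mem_edge_iff o e _).mpr (Or.inl rfl),
          by simp only [hVx_top, hIn]; omega⟩
      · rintro ⟨-, hlt⟩
        simp only [hVx_top, hIn] at hlt
        omega
    have key3 : ∀ (τ₀ : ∀ _ : G.edgeSet, (Unit ⊕ Fin q) ≃ Fin (q+1))
        (e : G.edgeSet) (i : Fin q),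
        ((τ₀ e (Sum.inr i) : ℕ) < (τ₀ e (Sum.inl ()) : ℕ)) ↔
          coronaDir o τ₀ (Sum.inl (topOf o e)) (Sum.inr (e, i)) := by
      intro τ₀ e i
      constructor
      · intro hlt
        exact ⟨(mem_edge_iff o e _).mpr (Or.inl rfl),
          by simp only [hVx_top, hIn]; omega⟩
      · rintro ⟨-, hlt⟩
        simp only [hVx_top, hIn] at hlt
        omega
    have hτ : τ = τ' := by
      funext e
      refine equiv_fin_unique (τ e) (τ' e) (fun a b => ?_)
      rcases a with ⟨⟩ | i <;> rcases b with ⟨⟩ | j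
      · exact iff_of_false (lt_irrefl _) (lt_irrefl _)
      · exact (key2 τ e j).trans ((iff_of_eq (congrFun (congrFun hd _) _)).trans
          (key2 τ' e j).symm)
      · exact (key3 τ e i).trans ((iff_of_eq (congrFun (congrFun hd _) _)).trans
          (key3 τ' e i).symm)
      · exact (key1 τ e i j).trans ((iff_of_eq (congrFun (congrFun hd _) _)).trans
          (key1 τ' e i j).symm)
    subst hτ
    rfl
  · rintro ⟨O, hO⟩
    have ho := restrict_rooted O root hO
    choose τ hτ using (fun e => exists_tau O e)
    refine ⟨⟨⟨restrictOrient O, ho⟩, τ⟩, ?_⟩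
    refine Subtype.ext (AcyclicOrientation.ext' ?_)
    show coronaDir (restrictOrient O) τ = O.dir
    set o := restrictOrient O with hodef
    funext x y
    apply propext
    rcases x with u | ⟨e, i⟩ <;> rcases y with v | ⟨f, j⟩
    · exact Iff.rfl
    · constructor
      · intro h
        have hu : u = topOf o f := coronaDir_top o τ f h
        obtain ⟨hm, hlt⟩ := h
        subst hu
        simp only [hVx_top] at hlt
        simp only [hIn] at hlt
        exact (hτ f (Sum.inl ()) (Sum.inr j)).mpr (Fin.lt_def.mpr (by omega))
      · intro h
        have hm : u ∈ (f : Sym2 V) := O.dir_adj _ _ h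
        rcases (mem_edge_iff o f u).mp hm with rfl | rfl
        · have h2 := Fin.lt_def.mp ((hτ f (Sum.inl ()) (Sum.inr j)).mp h)
          exact ⟨hm, by simp only [hVx_top]; simp only [hIn]; omega⟩
        · exact absurd h (O.asymm _ _ (sink_bot O root hO f j))
    · constructor
      · rintro ⟨hm, hlt⟩
        rcases (mem_edge_iff o e v).mp hm with rfl | rfl
        · simp only [hVx_top] at hlt
          simp only [hIn] at hlt
          exact (hτ e (Sum.inr i) (Sum.inl ())).mpr (Fin.lt_def.mpr (by omega))
        · exact sink_bot O root hO e i
      · intro h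
        have hm : v ∈ (e : Sym2 V) := O.dir_adj _ _ h
        rcases (mem_edge_iff o e v).mp hm with rfl | rfl
        · have h2 := Fin.lt_def.mp ((hτ e (Sum.inr i) (Sum.inl ())).mp h)
          exact ⟨hm, by simp only [hVx_top]; simp only [hIn]; omega⟩
        · exact ⟨hm, by simp only [hVx_bot]; simp only [hIn]; omega⟩
    · constructor
      · rintro ⟨hef, hlt⟩
        obtain rfl : e = f := hef
        simp only [hIn] at hlt
        exact (hτ e (Sum.inr i) (Sum.inr j)).mpr (Fin.lt_def.mpr (by omega))
      · intro h
        obtain rfl : e = f := (O.dir_adj _ _ h).1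
        have h2 := Fin.lt_def.mp ((hτ e (Sum.inr i) (Sum.inr j)).mp h)
        exact ⟨rfl, by simp only [hIn]; omega⟩

end Corona

section EdgeCount

variable {V : Type} {G : SimpleGraph V} {q : ℕ}

theorem card_mem_edge (e : G.edgeSet) : Nat.card {v : V // v ∈ (e : Sym2 V)} = 2 := by
  obtain ⟨⟨a, b⟩, h⟩ := Quot.exists_rep (e : Sym2 V)
  have he : (e : Sym2 V) = s(a, b) := h.symm
  have hadj : G.Adj a b := by
    rw [← SimpleGraph.mem_edgeSet, ← he]
    exact e.2
  have : Nat.card {v : V // v ∈ (e : Sym2 V)} = Nat.card ({a, b} : Set V) := by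
    refine Nat.card_congr (Equiv.subtypeEquivRight (fun v => ?_))
    rw [he, Sym2.mem_iff]
    simp [Set.mem_insert_iff]
  rw [this, Nat.card_coe_set_eq, Set.ncard_pair hadj.ne]

/-- Neighborhood of an original vertex in the edge corona. -/
def nbhdInl (u : V) :
    (edgeCorona G q).neighborSet (Sum.inl u) ≃
      (G.neighborSet u ⊕ ({e : G.edgeSet // u ∈ (e : Sym2 V)} × Fin q)) where
  toFun x := match x with
    | ⟨Sum.inl v, h⟩ => Sum.inl ⟨v, h⟩
    | ⟨Sum.inr (e, i), h⟩ => Sum.inr (⟨e, h⟩, i)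
  invFun y := match y with
    | Sum.inl ⟨v, h⟩ => ⟨Sum.inl v, h⟩
    | Sum.inr (⟨e, h⟩, i) => ⟨Sum.inr (e, i), h⟩
  left_inv := by rintro ⟨(v | ⟨e, i⟩), h⟩ <;> rfl
  right_inv := by rintro (⟨v, h⟩ | ⟨⟨e, h⟩, i⟩) <;> rfl

/-- Neighborhood of a clique vertex in the edge corona. -/
def nbhdInr (e : G.edgeSet) (i : Fin q) :
    (edgeCorona G q).neighborSet (Sum.inr (e, i)) ≃
      ({v : V // v ∈ (e : Sym2 V)} ⊕ {j : Fin q // j ≠ i}) where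
  toFun x := match x with
    | ⟨Sum.inl v, h⟩ => Sum.inl ⟨v, h⟩
    | ⟨Sum.inr (f, j), h⟩ => Sum.inr ⟨j, fun hc => h.2 (hc.symm)⟩
  invFun y := match y with
    | Sum.inl ⟨v, h⟩ => ⟨Sum.inl v, h⟩
    | Sum.inr ⟨j, hj⟩ => ⟨Sum.inr (e, j), ⟨rfl, fun hc => hj hc.symm⟩⟩
  left_inv := by
    rintro ⟨(v | ⟨f, j⟩), h⟩
    · rfl
    · obtain ⟨h1, h2⟩ := h
      obtain rfl : e = f := h1
      rfl
  right_inv := by rintro (⟨v, h⟩ | ⟨j, hj⟩) <;> rfl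

theorem card_incident (u : V) [Fintype V] [DecidableEq V] [DecidableRel G.Adj] :
    Nat.card {e : G.edgeSet // u ∈ (e : Sym2 V)} = G.degree u := by
  classical
  have : Nat.card {e : G.edgeSet // u ∈ (e : Sym2 V)} = Nat.card (G.incidenceSet u) := by
    refine Nat.card_congr ⟨fun x => ⟨x.1.1, x.1.2, x.2⟩,
      fun y => ⟨⟨y.1, y.2.1⟩, y.2.2⟩, fun x => rfl, fun y => rfl⟩
  rw [this, Nat.card_eq_fintype_card, SimpleGraph.card_incidenceSet_eq_degree]

theorem card_edge_corona [Fintype V] [DecidableEq V] [DecidableRel G.Adj] (hq : 1 ≤ q) :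
    2 * Nat.card (edgeCorona G q).edgeSet =
      Nat.card G.edgeSet * ((q + 1) * (q + 2)) := by
  classical
  have hdegInl : ∀ u : V, (edgeCorona G q).degree (Sum.inl u) = (q + 1) * G.degree u := by
    intro u
    rw [← SimpleGraph.card_neighborSet_eq_degree, ← Nat.card_eq_fintype_card,
      Nat.card_congr (nbhdInl u), Nat.card_sum, Nat.card_prod, card_incident u,
      Nat.card_eq_fintype_card, SimpleGraph.card_neighborSet_eq_degree,
      Nat.card_eq_fintype_card, Fintype.card_fin]
    ring
  have hdegInr : ∀ (e : G.edgeSet) (i : Fin q),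
      (edgeCorona G q).degree (Sum.inr (e, i)) = q + 1 := by
    intro e i
    rw [← SimpleGraph.card_neighborSet_eq_degree, ← Nat.card_eq_fintype_card,
      Nat.card_congr (nbhdInr e i), Nat.card_sum, card_mem_edge,
      Nat.card_eq_fintype_card, Fintype.card_subtype_compl, Fintype.card_fin,
      Fintype.card_subtype_eq]
    omega
  have hsum := SimpleGraph.sum_degrees_eq_twice_card_edges (edgeCorona G q)
  have hsumG := SimpleGraph.sum_degrees_eq_twice_card_edges G
  rw [Fintype.sum_sum_type] at hsum
  have h1 : ∑ u : V, (edgeCorona G q).degree (Sum.inl u) =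
      (q + 1) * (2 * G.edgeFinset.card) := by
    rw [← hsumG, Finset.mul_sum]
    exact Finset.sum_congr rfl (fun u _ => hdegInl u)
  have h2 : ∑ p : G.edgeSet × Fin q, (edgeCorona G q).degree (Sum.inr p) =
      Nat.card G.edgeSet * (q * (q + 1)) := by
    have : ∀ p : G.edgeSet × Fin q, (edgeCorona G q).degree (Sum.inr p) = q + 1 :=
      fun ⟨e, i⟩ => hdegInr e i
    rw [Finset.sum_congr rfl (fun p _ => this p), Finset.sum_const, Finset.card_univ,
      Fintype.card_prod, Fintype.card_fin, smul_eq_mul, Nat.card_eq_fintype_card]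
    ring
  have hcards : Nat.card (edgeCorona G q).edgeSet = (edgeCorona G q).edgeFinset.card := by
    rw [Nat.card_eq_fintype_card, SimpleGraph.edgeFinset_card]
  have hE : Nat.card G.edgeSet = G.edgeFinset.card := by
    rw [Nat.card_eq_fintype_card, SimpleGraph.edgeFinset_card]
  rw [hE] at h2
  calc 2 * Nat.card (edgeCorona G q).edgeSet
      = ∑ u : V, (edgeCorona G q).degree (Sum.inl u) +
        ∑ p : G.edgeSet × Fin q, (edgeCorona G q).degree (Sum.inr p) := by
        rw [hcards]; exact hsum.symm
    _ = (q + 1) * (2 * G.edgeFinset.card) + G.edgeFinset.card * (q * (q + 1)) := by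
        rw [h1, h2]
    _ = G.edgeFinset.card * ((q + 1) * (q + 2)) := by ring
    _ = Nat.card G.edgeSet * ((q + 1) * (q + 2)) := by rw [hE]

end EdgeCount


section Assembly

instance finGVert (q : ℕ) : ∀ g, Finite (GVert q g)
  | 0 => inferInstanceAs (Finite (Fin (q+2)))
  | g+1 =>
    haveI := finGVert q g
    inferInstanceAs (Finite (GVert q g ⊕ ((Gnet q g).edgeSet × Fin q)))

theorem two_m (q : ℕ) : 2 * ((q+1)*(q+2)/2) = (q+1)*(q+2) := by
  obtain ⟨c, hc⟩ := Nat.even_mul_succ_self (q+1)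
  have hc2 : (q+1)*(q+2) = c + c := hc
  omega

theorem card_edges (q : ℕ) (hq : 1 ≤ q) : ∀ g,
    Nat.card (Gnet q g).edgeSet = ((q+1)*(q+2)/2)^(g+1)
  | 0 => by
    classical
    have h0 : Nat.card (Gnet q 0).edgeSet =
        Nat.card (⊤ : SimpleGraph (Fin (q+2))).edgeSet := rfl
    rw [h0, Nat.card_eq_fintype_card, ← SimpleGraph.edgeFinset_card,
      SimpleGraph.card_edgeFinset_top_eq_card_choose_two, Fintype.card_fin,
      Nat.choose_two_right, pow_one]
    have h2 : (q+2) - 1 = q + 1 := rfl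
    rw [h2, Nat.mul_comm]
  | g+1 => by
    classical
    haveI : Finite (GVert q g) := finGVert q g
    letI : Fintype (GVert q g) := Fintype.ofFinite _
    letI : DecidableEq (GVert q g) := Classical.decEq _
    letI : DecidableRel (Gnet q g).Adj := Classical.decRel _
    have h := card_edge_corona (G := Gnet q g) (q := q) hq
    have hg := card_edges q hq g
    rw [hg] at h
    refine Nat.eq_of_mul_eq_mul_left (show 0 < 2 by omega) ?_
    calc 2 * Nat.card (Gnet q (g+1)).edgeSet
        = ((q+1)*(q+2)/2)^(g+1) * ((q+1)*(q+2)) := h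
      _ = ((q+1)*(q+2)/2)^(g+1) * (2 * ((q+1)*(q+2)/2)) := by rw [two_m]
      _ = 2 * ((q+1)*(q+2)/2)^(g+1+1) := by ring

def expAux (m : ℕ) : ℕ → ℕ
  | 0 => 1
  | g+1 => expAux m g + m^(g+1)

theorem expE_eq (q : ℕ) (hq : 1 ≤ q) (g : ℕ) :
    expE q g = expAux ((q+1)*(q+2)/2) g := by
  have h2m := two_m q
  set m := (q+1)*(q+2)/2 with hm
  have hr : (q+1)*(q+2) = q*(q+3) + 2 := by ring
  have hmul : 0 < (q+1)*(q+2) := Nat.mul_pos (by omega) (by omega)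
  have hm1 : 1 ≤ m := by omega
  have hkey : ∀ g, 2 * (m^(g+1) - 1) = (q*(q+3)) * expAux m g := by
    intro g
    induction g with
    | zero =>
      simp only [expAux, zero_add, pow_one, Nat.mul_one]
      omega
    | succ g ih =>
      have hA1 : 1 ≤ m^(g+1) := Nat.one_le_pow _ _ (by omega)
      have hP : m^(g+1) * (m-1) + m^(g+1) = m^(g+1) * m := by
        have hmm : m - 1 + 1 = m := Nat.sub_add_cancel hm1
        calc m^(g+1) * (m-1) + m^(g+1) = m^(g+1) * ((m-1)+1) := by ring
          _ = m^(g+1) * m := by rw [hmm]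
      have hpow : m^(g+1+1) = m^(g+1) * m := pow_succ m (g+1)
      have hQ : q*(q+3) * m^(g+1) = 2 * (m^(g+1) * (m-1)) := by
        have hr2 : q*(q+3) = 2*(m-1) := by omega
        rw [hr2]; ring
      simp only [expAux]
      rw [Nat.mul_add, ← ih, hQ, hpow]
      omega
  show (2 * (m^(g+1) - 1)) / (q*(q+3)) = expAux m g
  rw [hkey g, Nat.mul_div_cancel_left _ (Nat.mul_pos hq (by omega))]

theorem card_tau (q : ℕ) :
    Nat.card ((Unit ⊕ Fin q) ≃ Fin (q+1)) = (q+1).factorial := by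
  classical
  have hcard : Fintype.card (Unit ⊕ Fin q) = q + 1 := by
    simp only [Fintype.card_sum, Fintype.card_unit, Fintype.card_fin]
    omega
  have e0 : (Unit ⊕ Fin q) ≃ Fin (q+1) :=
    Fintype.equivFinOfCardEq hcard
  rw [Nat.card_eq_fintype_card, Fintype.card_equiv e0, hcard]

end Assembly

/-- For all `g ≥ 0`, `q ≥ 1`, the number of acyclic orientations of `G_q(g)`
that are root-connected (the fixed root, a hub vertex, is reachable by a
directed path from every other vertex) is `((q+1)!)^{E(g,q)}`. -/
theorem card_rootConnected_acyclicOrientations (q g : ℕ) (hq : 1 ≤ q) :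
    Nat.card {o : AcyclicOrientation (Gnet q g) //
        ∀ v : GVert q g, v ≠ hub q g 0 → Relation.TransGen o.dir v (hub q g 0)} =
      Nat.factorial (q + 1) ^ expE q g := by
  induction g with
  | zero =>
    have h0 : expE q 0 = 1 := by rw [expE_eq q hq 0]; rfl
    rw [h0, pow_one]
    exact card_rooted_complete (q+1) 0
  | succ g ih =>
    classical
    haveI : Finite (GVert q g) := finGVert q g
    have hc := corona_card (G := Gnet q g) (q := q) (hub q g 0)
    calc Nat.card {o : AcyclicOrientation (Gnet q (g+1)) //
          ∀ v : GVert q (g+1), v ≠ hub q (g+1) 0 →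
            Relation.TransGen o.dir v (hub q (g+1) 0)}
        = Nat.card {o : AcyclicOrientation (Gnet q g) //
            ∀ v : GVert q g, v ≠ hub q g 0 → Relation.TransGen o.dir v (hub q g 0)} *
          Nat.card ((Gnet q g).edgeSet → ((Unit ⊕ Fin q) ≃ Fin (q+1))) := by
          rw [← Nat.card_prod]
          exact hc
      _ = ((q+1).factorial ^ expE q g) *
          ((q+1).factorial ^ ((q+1)*(q+2)/2)^(g+1)) := by
          rw [ih, Nat.card_fun, card_tau, card_edges q hq g]
      _ = (q+1).factorial ^ (expE q g + ((q+1)*(q+2)/2)^(g+1)) := (pow_add _ _ _).symm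
      _ = (q+1).factorial ^ expE q (g+1) := by
          rw [expE_eq q hq (g+1), expE_eq q hq g]
          simp only [expAux]
end
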